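/- Let l ≥ 1 and let a, b, c : ℤ → ℂ be l-periodic sequences. Let p be an integer, let T = tr A_l(p), and assume det A_l(p) = 0. Then for every integer j with 0 ≤ j ≤ l − 2 and every integer m ≥ 1, K_{lm+j}(p−j) = T^{m−1}·(K_j(p−j)·K_l(p) − b_{p−1}·c_{p−1}·K_{j−1}(p−j)·K_{l−1}(p+1)). -/

import Mathlib

noncomputable def contK (a b c : ℤ → ℂ) (p n : ℤ) : ℂ :=
  if n < 0 then 0 else
    Matrix.det (Matrix.of fun i j : Fin n.toNat =>
      if (i : ℕ) = (j : ℕ) then a (p + (i : ℕ))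
      else if (i : ℕ) + 1 = (j : ℕ) then b (p + (i : ℕ))
      else if (i : ℕ) = (j : ℕ) + 1 then c (p + (j : ℕ))
      else 0)

def Lmat (α β : ℂ) : Matrix (Fin 2) (Fin 2) ℂ := !![α, β; 1, 0]

noncomputable def Amat (a b c : ℤ → ℂ) (p : ℤ) (n : ℕ) : Matrix (Fin 2) (Fin 2) ℂ :=
  ((List.range n).map (fun i => Lmat (a (p + (i : ℕ))) (-(b (p + (i : ℕ)) * c (p + (i : ℕ)))))).prod

noncomputable def triMat (a b c : ℤ → ℂ) (p : ℤ) (n : ℕ) : Matrix (Fin n) (Fin n) ℂ :=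
  Matrix.of fun i j : Fin n =>
      if (i : ℕ) = (j : ℕ) then a (p + (i : ℕ))
      else if (i : ℕ) + 1 = (j : ℕ) then b (p + (i : ℕ))
      else if (i : ℕ) = (j : ℕ) + 1 then c (p + (j : ℕ))
      else 0

lemma contK_natCast (a b c : ℤ → ℂ) (p : ℤ) (n : ℕ) :
    contK a b c p (n : ℤ) = (triMat a b c p n).det := by
  rw [contK, if_neg (by omega)]
  rfl

lemma contK_neg (a b c : ℤ → ℂ) (p n : ℤ) (h : n < 0) : contK a b c p n = 0 := by
  rw [contK, if_pos h]

lemma contK_zero (a b c : ℤ → ℂ) (p : ℤ) : contK a b c p 0 = 1 := by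
  rw [show (0:ℤ) = ((0:ℕ):ℤ) from rfl, contK_natCast]
  simp [triMat, Matrix.det_fin_zero]

lemma contK_one (a b c : ℤ → ℂ) (p : ℤ) : contK a b c p 1 = a p := by
  rw [show (1:ℤ) = ((1:ℕ):ℤ) from rfl, contK_natCast]
  simp [triMat, Matrix.det_fin_one]

open Matrix in
lemma triMat_det_rec (a b c : ℤ → ℂ) (p : ℤ) (n : ℕ) :
    (triMat a b c p (n+2)).det =
      a p * (triMat a b c (p+1) (n+1)).det - b p * c p * (triMat a b c (p+2) n).det := by
  rw [Matrix.det_succ_row_zero (triMat a b c p (n+2))]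
  rw [Fin.sum_univ_succ, Fin.sum_univ_succ]
  have hrest : ∀ j : Fin n, triMat a b c p (n+2) 0 j.succ.succ = 0 := by
    intro j
    simp only [triMat, Matrix.of_apply, Fin.val_zero, Fin.val_succ]
    split_ifs <;> first | rfl | contradiction | omega | (simp only [Fin.val_zero, Fin.val_succ] at *; omega)
  rw [Finset.sum_eq_zero (fun j _ => by rw [hrest j]; ring)]
  have h00 : triMat a b c p (n+2) 0 0 = a p := by
    simp [triMat]
  have h01 : triMat a b c p (n+2) 0 1 = b p := by
    simp only [triMat, Matrix.of_apply]
    norm_num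
  have hsub0 : (triMat a b c p (n+2)).submatrix Fin.succ (Fin.succAbove 0) =
      triMat a b c (p+1) (n+1) := by
    ext i j
    simp only [Matrix.submatrix_apply, Fin.succAbove_zero, triMat, Matrix.of_apply, Fin.val_succ]
    have e1 : p + ((i:ℕ) + 1 : ℕ) = p + 1 + (i:ℕ) := by push_cast; ring
    have e2 : p + ((j:ℕ) + 1 : ℕ) = p + 1 + (j:ℕ) := by push_cast; ring
    by_cases h : (i:ℕ) = (j:ℕ)
    · rw [if_pos (by omega), if_pos h, e1]
    · rw [if_neg (by omega)]
      by_cases h2 : (i:ℕ) + 1 = (j:ℕ)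
      · rw [if_pos (by omega), if_neg h, if_pos h2, e1]
      · rw [if_neg (by omega), if_neg h, if_neg h2]
        by_cases h3 : (i:ℕ) = (j:ℕ) + 1
        · rw [if_pos (by omega), if_pos h3, e2]
        · rw [if_neg (by omega), if_neg h3]
  -- second minor
  have hsub1 : ((triMat a b c p (n+2)).submatrix Fin.succ (Fin.succAbove 1)).det
      = c p * (triMat a b c (p+2) n).det := by
    rw [Matrix.det_succ_column_zero, Fin.sum_univ_succ]
    have hc0 : ∀ i : Fin n,
        ((triMat a b c p (n+2)).submatrix Fin.succ (Fin.succAbove 1)) i.succ 0 = 0 := by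
      intro i
      have hv : (1 : Fin (n+2)).succAbove 0 = 0 := by
        rw [Fin.succAbove_of_castSucc_lt _ _ (by simp [Fin.lt_def])]
        rfl
      simp only [Matrix.submatrix_apply, triMat, Matrix.of_apply, hv, Fin.val_succ, Fin.val_zero]
      split_ifs <;> first | rfl | contradiction | omega | (simp only [Fin.val_zero, Fin.val_succ] at *; omega)
    rw [Finset.sum_eq_zero (fun i _ => by rw [hc0 i]; ring)]
    have hN00 : ((triMat a b c p (n+2)).submatrix Fin.succ (Fin.succAbove 1)) 0 0 = c p := by
      have hv : (1 : Fin (n+2)).succAbove 0 = 0 := by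
        rw [Fin.succAbove_of_castSucc_lt _ _ (by simp [Fin.lt_def])]
        rfl
      simp only [Matrix.submatrix_apply, triMat, Matrix.of_apply, hv, Fin.val_succ, Fin.val_zero]
      rw [if_neg ?_, if_neg ?_, if_pos ?_]
      · norm_num
      · trivial
      · omega
      · omega
    have hsub2 : (((triMat a b c p (n+2)).submatrix Fin.succ (Fin.succAbove 1)).submatrix
        (Fin.succAbove 0) Fin.succ) = triMat a b c (p+2) n := by
      ext i j
      have hv : ∀ x : Fin n, (1 : Fin (n+2)).succAbove (Fin.succ x) = x.succ.succ := by
        intro x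
        rw [Fin.succAbove_of_le_castSucc _ _ (by simp [Fin.le_def])]
      simp only [Matrix.submatrix_apply, Fin.succAbove_zero, triMat, Matrix.of_apply,
        Fin.val_succ, hv]
      have e1 : p + ((i:ℕ) + 1 + 1 : ℕ) = p + 2 + (i:ℕ) := by push_cast; ring
      have e2 : p + ((j:ℕ) + 1 + 1 : ℕ) = p + 2 + (j:ℕ) := by push_cast; ring
      by_cases h : (i:ℕ) = (j:ℕ)
      · rw [if_pos (by omega), if_pos h, e1]
      · rw [if_neg (by omega)]
        by_cases h2 : (i:ℕ) + 1 = (j:ℕ)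
        · rw [if_pos (by omega), if_neg h, if_pos h2, e1]
        · rw [if_neg (by omega), if_neg h, if_neg h2]
          by_cases h3 : (i:ℕ) = (j:ℕ) + 1
          · rw [if_pos (by omega), if_pos h3, e2]
          · rw [if_neg (by omega), if_neg h3]
    rw [hN00, hsub2]
    simp
  simp only [Fin.succ_zero_eq_one]
  rw [h00, h01, hsub0, hsub1]
  simp only [Fin.val_zero, Fin.val_one, pow_zero, pow_one]
  ring

lemma contK_neg' (a b c : ℤ → ℂ) (p n : ℤ) (h : n < 0) : contK a b c p n = 0 :=
  contK_neg a b c p n h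

lemma contK_rec (a b c : ℤ → ℂ) (p : ℤ) (n : ℕ) :
    contK a b c p ((n:ℤ)+1) =
      a p * contK a b c (p+1) (n:ℤ) - b p * c p * contK a b c (p+2) ((n:ℤ)-1) := by
  cases n with
  | zero =>
      simp only [Nat.cast_zero, zero_add, zero_sub]
      rw [contK_one, contK_zero, contK_neg' a b c _ _ (by norm_num : (-1:ℤ) < 0)]
      ring
  | succ k =>
      have h1 : ((k+1:ℕ):ℤ)+1 = ((k+2:ℕ):ℤ) := by push_cast; ring
      have h2 : ((k+1:ℕ):ℤ)-1 = ((k:ℕ):ℤ) := by push_cast; ring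
      rw [h1, h2, contK_natCast, contK_natCast, contK_natCast, triMat_det_rec]

lemma Amat_add (a b c : ℤ → ℂ) (p : ℤ) (s t : ℕ) :
    Amat a b c p (s+t) = Amat a b c p s * Amat a b c (p+s) t := by
  rw [Amat, Amat, Amat, List.range_add, List.map_append, List.prod_append, List.map_map]
  congr 1
  refine congrArg _ (List.map_congr_left fun i _ => ?_)
  have e : p + ((s+i : ℕ) : ℤ) = p + s + (i:ℕ) := by push_cast; ring
  simp only [Function.comp_apply, e]

lemma Amat_one (a b c : ℤ → ℂ) (p : ℤ) :
    Amat a b c p 1 = Lmat (a p) (-(b p * c p)) := by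
  simp [Amat, List.range_succ]

lemma Amat_succ_left (a b c : ℤ → ℂ) (p : ℤ) (n : ℕ) :
    Amat a b c p (n+1) = Lmat (a p) (-(b p * c p)) * Amat a b c (p+1) n := by
  rw [show n+1 = 1+n from by omega, Amat_add, Amat_one]
  norm_num

lemma Amat_entries (a b c : ℤ → ℂ) (n : ℕ) : ∀ p : ℤ,
    Amat a b c p (n+1) =
      !![contK a b c p ((n:ℤ)+1), -(b (p+n) * c (p+n)) * contK a b c p (n:ℤ);
         contK a b c (p+1) (n:ℤ), -(b (p+n) * c (p+n)) * contK a b c (p+1) ((n:ℤ)-1)] := by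
  induction n with
  | zero =>
      intro p
      rw [Amat_one, Lmat]
      have h0 : contK a b c (p+1) (-1) = 0 := contK_neg' a b c _ _ (by norm_num)
      simp [contK_one, contK_zero, h0]
  | succ k ih =>
      intro p
      rw [Amat_succ_left, ih (p+1), Lmat]
      have e3 : p+1+1 = p+2 := by ring
      have e4 : p+1+((k:ℕ):ℤ) = p+((k:ℕ):ℤ)+1 := by ring
      have r1 := contK_rec a b c p (k+1)
      have r2 := contK_rec a b c p k
      push_cast at r1 r2 ⊢
      rw [e3, e4]
      ext i j
      fin_cases i <;> fin_cases j <;>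
        simp [Matrix.mul_apply, Fin.sum_univ_two]
      · rw [show (k:ℤ)+1-1 = (k:ℤ) from by ring] at r1
        linear_combination -r1
      · rw [show p + ((k:ℤ)+1) = p+(k:ℤ)+1 from by ring]
        linear_combination (b (p+(k:ℤ)+1) * c (p+(k:ℤ)+1)) * r2
      · rw [show p + ((k:ℤ)+1) = p+(k:ℤ)+1 from by ring]
        ring_nf
        exact Or.inl trivial

lemma Amat_zero' (a b c : ℤ → ℂ) (p : ℤ) : Amat a b c p 0 = 1 := by
  simp [Amat]

lemma Amat_period (l : ℕ) (a b c : ℤ → ℂ)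
    (ha : ∀ k : ℤ, a (k + l) = a k) (hb : ∀ k : ℤ, b (k + l) = b k)
    (hc : ∀ k : ℤ, c (k + l) = c k) (p : ℤ) (n : ℕ) :
    Amat a b c (p + l) n = Amat a b c p n := by
  unfold Amat
  congr 1
  refine List.map_congr_left fun i _ => ?_
  have key : ∀ f : ℤ → ℂ, (∀ k : ℤ, f (k + l) = f k) → f (p + l + i) = f (p + i) := by
    intro f hf
    rw [show p + (l:ℤ) + (i:ℕ) = (p + (i:ℕ)) + l from by ring, hf]
  rw [key a ha, key b hb, key c hc]

lemma Amat_shift_mul (l : ℕ) (a b c : ℤ → ℂ)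
    (ha : ∀ k : ℤ, a (k + l) = a k) (hb : ∀ k : ℤ, b (k + l) = b k)
    (hc : ∀ k : ℤ, c (k + l) = c k) (p : ℤ) (m n : ℕ) :
    Amat a b c (p + l*m) n = Amat a b c p n := by
  induction m with
  | zero => norm_num
  | succ k ih =>
      rw [show p + (l:ℤ)*((k:ℕ)+1:ℕ) = (p + l*k) + l from by push_cast; ring,
        Amat_period l a b c ha hb hc, ih]

lemma Amat_mul_pow (l : ℕ) (a b c : ℤ → ℂ)
    (ha : ∀ k : ℤ, a (k + l) = a k) (hb : ∀ k : ℤ, b (k + l) = b k)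
    (hc : ∀ k : ℤ, c (k + l) = c k) (p : ℤ) (m : ℕ) :
    Amat a b c p (l*m) = (Amat a b c p l)^m := by
  induction m with
  | zero => simp [Amat_zero']
  | succ k ih =>
      rw [Nat.mul_succ, Amat_add, ih, pow_succ]
      congr 1
      have := Amat_shift_mul l a b c ha hb hc p k l
      rw [show p + ((l*k : ℕ):ℤ) = p + (l:ℤ)*k from by push_cast; ring, this]

lemma pow_eq_trace_smul (A : Matrix (Fin 2) (Fin 2) ℂ) (h : A.det = 0) (m : ℕ) :
    A^(m+1) = A.trace^m • A := by
  induction m with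
  | zero => simp
  | succ k ih =>
      have hd := h
      rw [Matrix.det_fin_two] at hd
      have key : A * A = A.trace • A := by
        ext i j
        fin_cases i <;> fin_cases j <;>
          simp [Matrix.mul_apply, Fin.sum_univ_two, Matrix.trace_fin_two] <;>
          first
          | linear_combination hd
          | linear_combination -hd
          | linear_combination (0:ℂ) * hd

      calc A^(k+1+1) = A^(k+1) * A := pow_succ A (k+1)
        _ = (A.trace^k • A) * A := by rw [ih]
        _ = A.trace^k • (A*A) := by rw [Matrix.smul_mul]
        _ = A.trace^k • (A.trace • A) := by rw [key]
        _ = A.trace^(k+1) • A := by rw [smul_smul, pow_succ]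

lemma Amat_00 (a b c : ℤ → ℂ) (p : ℤ) (n : ℕ) :
    Amat a b c p n 0 0 = contK a b c p (n:ℤ) := by
  cases n with
  | zero => simp [Amat_zero', contK_zero, Matrix.one_apply]
  | succ k =>
      rw [Amat_entries a b c k p]
      push_cast
      simp

lemma Amat_10 (a b c : ℤ → ℂ) (p : ℤ) (n : ℕ) :
    Amat a b c p n 1 0 = contK a b c (p+1) ((n:ℤ)-1) := by
  cases n with
  | zero =>
      rw [Amat_zero', contK_neg' a b c _ _ (by norm_num)]
      simp [Matrix.one_apply]
  | succ k =>
      rw [Amat_entries a b c k p, show ((k+1:ℕ):ℤ)-1 = (k:ℤ) from by push_cast; ring]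
      simp

lemma Amat_01 (a b c : ℤ → ℂ) (p : ℤ) (n : ℕ) :
    Amat a b c p n 0 1 = -(b (p+(n:ℤ)-1) * c (p+(n:ℤ)-1)) * contK a b c p ((n:ℤ)-1) := by
  cases n with
  | zero =>
      rw [Amat_zero', contK_neg' a b c _ _ (by norm_num)]
      simp [Matrix.one_apply]
  | succ k =>
      rw [Amat_entries a b c k p, show ((k+1:ℕ):ℤ)-1 = (k:ℤ) from by push_cast; ring,
        show p+((k+1:ℕ):ℤ)-1 = p+(k:ℤ) from by push_cast; ring]
      simp

/-- Rózsa's explicit formula for periodic continuants (zero determinant case): for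
`l`-periodic sequences, `T = tr A_l(p)`, `det A_l(p) = 0`, `0 ≤ j ≤ l − 2` and `m ≥ 1`:
`K_{lm+j}(p−j) = T^{m−1}·(K_j(p−j)·K_l(p) − b_{p−1}·c_{p−1}·K_{j−1}(p−j)·K_{l−1}(p+1))`. -/
theorem contK_periodic_explicit_det_zero (l : ℕ) (hl : 1 ≤ l) (a b c : ℤ → ℂ)
    (ha : ∀ k : ℤ, a (k + l) = a k) (hb : ∀ k : ℤ, b (k + l) = b k)
    (hc : ∀ k : ℤ, c (k + l) = c k) (p : ℤ) (T : ℂ)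
    (hT : T = (Amat a b c p l).trace) (hD0 : (Amat a b c p l).det = 0)
    (j : ℤ) (hj0 : 0 ≤ j) (hj : j ≤ (l : ℤ) - 2) (m : ℕ) (hm : 1 ≤ m) :
    contK a b c (p - j) ((l : ℤ) * m + j) =
      T ^ (m - 1) * (contK a b c (p - j) j * contK a b c p (l : ℤ)
        - b (p - 1) * c (p - 1) * contK a b c (p - j) (j - 1)
          * contK a b c (p + 1) ((l : ℤ) - 1)) := by
  lift j to ℕ using hj0 with jn
  obtain ⟨m', rfl⟩ : ∃ m', m = m' + 1 := ⟨m - 1, by omega⟩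
  have hsplit : Amat a b c (p - jn) (jn + l*(m'+1)) =
      Amat a b c (p - jn) jn * Amat a b c p (l*(m'+1)) := by
    rw [Amat_add]
    congr 2
    push_cast
    ring
  have hpow : Amat a b c p (l*(m'+1)) = T^m' • Amat a b c p l := by
    rw [Amat_mul_pow l a b c ha hb hc p (m'+1), pow_eq_trace_smul _ hD0, hT]
  have hL : contK a b c (p - jn) ((l:ℤ) * ((m'+1:ℕ):ℤ) + jn) =
      Amat a b c (p - jn) (jn + l*(m'+1)) 0 0 := by
    rw [Amat_00, show (((jn + l*(m'+1) : ℕ)):ℤ) = (l:ℤ) * ((m'+1:ℕ):ℤ) + jn from by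
      push_cast; ring]
  rw [hL, hsplit, hpow, Matrix.mul_smul, Matrix.smul_apply, Matrix.mul_apply,
    Fin.sum_univ_two, Amat_00, Amat_00, Amat_01, Amat_10,
    show p - (jn:ℤ) + (jn:ℤ) - 1 = p - 1 from by ring]
  simp only [Nat.add_sub_cancel, smul_eq_mul]
  ring
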